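/- Let Γ₁ and Γ₂ be finite nonempty simple graphs and let Γ = Γ₁ ∘ Γ₂ be their join. Then Γ is of weak type II if and only if both Γ₁ and Γ₂ are of weak type II. -/

import Mathlib

open SimpleGraph

variable {V : Type*}

/-- The closed star of a vertex: the vertex together with its neighbors. -/
def gstar (G : SimpleGraph V) (v : V) : Set V := insert v (G.neighborSet v)

/-- `a` and `b` lie in the same connected component of the subgraph induced on `s`. -/
def SameComp (G : SimpleGraph V) (s : Set V) (a b : V) : Prop :=
  ∃ (ha : a ∈ s) (hb : b ∈ s), (G.induce s).Reachable ⟨a, ha⟩ ⟨b, hb⟩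

/-- `a` and `b` lie in different connected components of the subgraph induced on `s`. -/
def DiffComp (G : SimpleGraph V) (s : Set V) (a b : V) : Prop :=
  a ∈ s ∧ b ∈ s ∧ ¬ SameComp G s a b

/-- `Γ` is of weak type II. -/
def WeakTypeII (G : SimpleGraph V) : Prop :=
  G.Connected ∧ ∀ v w : V, G.dist v w = 2 →
    (G.induce ((G.neighborSet v ∩ G.neighborSet w)ᶜ)).Connected

/-- `Γ` is of type II. -/
def TypeII (G : SimpleGraph V) : Prop :=
  G.Connected ∧ ∀ v w : V, v ≠ w →
    (G.induce ((G.neighborSet v ∩ G.neighborSet w)ᶜ)).Connected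

/-- The join of two simple graphs: keep all edges of each factor and add all edges between
the two factors. -/
def joinGraph {V W : Type*} (G : SimpleGraph V) (H : SimpleGraph W) :
    SimpleGraph (V ⊕ W) where
  Adj x y :=
    match x, y with
    | Sum.inl a, Sum.inl b => G.Adj a b
    | Sum.inr a, Sum.inr b => H.Adj a b
    | Sum.inl _, Sum.inr _ => True
    | Sum.inr _, Sum.inl _ => True
  symm := by
    constructor
    rintro (a | a) (b | b) h
    · exact G.adj_symm h
    · trivial
    · trivial
    · exact H.adj_symm h
  loopless := by
    constructor
    rintro (a | a) h
    · exact G.irrefl h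
    · exact H.irrefl h

section Aux
variable {V W : Type*} {G : SimpleGraph V} {H : SimpleGraph W}

@[simp] lemma join_adj_ll {a b : V} : (joinGraph G H).Adj (Sum.inl a) (Sum.inl b) ↔ G.Adj a b := Iff.rfl
@[simp] lemma join_adj_rr {a b : W} : (joinGraph G H).Adj (Sum.inr a) (Sum.inr b) ↔ H.Adj a b := Iff.rfl
@[simp] lemma join_adj_lr {a : V} {b : W} : (joinGraph G H).Adj (Sum.inl a) (Sum.inr b) := trivial
@[simp] lemma join_adj_rl {a : W} {b : V} : (joinGraph G H).Adj (Sum.inr a) (Sum.inl b) := trivial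

lemma join_connected [Nonempty V] [Nonempty W] : (joinGraph G H).Connected := by
  rw [connected_iff]
  refine ⟨fun x y => ?_, inferInstance⟩
  obtain w := Classical.arbitrary W
  obtain v := Classical.arbitrary V
  rcases x with a | a <;> rcases y with b | b
  · exact ⟨Walk.cons (join_adj_lr (b := w)) (Walk.cons join_adj_rl Walk.nil)⟩
  · exact ⟨Walk.cons join_adj_lr Walk.nil⟩
  · exact ⟨Walk.cons join_adj_rl Walk.nil⟩
  · exact ⟨Walk.cons (join_adj_rl (b := v)) (Walk.cons join_adj_lr Walk.nil)⟩

lemma join_dist_two [Nonempty V] [Nonempty W] {x y : V ⊕ W} (hne : x ≠ y)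
    (hadj : ¬ (joinGraph G H).Adj x y) : (joinGraph G H).dist x y = 2 := by
  have h1 : (joinGraph G H).dist x y ≠ 1 := fun h => hadj (dist_eq_one_iff_adj.mp h)
  have h0 : (joinGraph G H).dist x y ≠ 0 := by
    have := (join_connected (G := G) (H := H)).pos_dist_of_ne hne
    omega
  have h2 : (joinGraph G H).dist x y ≤ 2 := by
    rcases x with a | a <;> rcases y with b | b
    · obtain w := Classical.arbitrary W
      exact SimpleGraph.dist_le (Walk.cons (join_adj_lr (b := w)) (Walk.cons join_adj_rl Walk.nil))
    · exact absurd join_adj_lr hadj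
    · exact absurd join_adj_rl hadj
    · obtain v := Classical.arbitrary V
      exact SimpleGraph.dist_le (Walk.cons (join_adj_rl (b := v)) (Walk.cons join_adj_lr Walk.nil))
  omega

lemma join_compl_inl (a b : V) :
    ((joinGraph G H).neighborSet (Sum.inl a) ∩ (joinGraph G H).neighborSet (Sum.inl b))ᶜ
      = Sum.inl '' ((G.neighborSet a ∩ G.neighborSet b)ᶜ) := by
  ext (c | w)
  · simp [mem_neighborSet]
  · simp [mem_neighborSet]

lemma join_compl_inr (a b : W) :
    ((joinGraph G H).neighborSet (Sum.inr a) ∩ (joinGraph G H).neighborSet (Sum.inr b))ᶜ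
      = Sum.inr '' ((H.neighborSet a ∩ H.neighborSet b)ᶜ) := by
  ext (v | c)
  · simp [mem_neighborSet]
  · simp [mem_neighborSet]

noncomputable def isoInl (S : Set V) : G.induce S ≃g (joinGraph G H).induce (Sum.inl '' S) where
  toEquiv := Equiv.Set.image Sum.inl S Sum.inl_injective
  map_rel_iff' := Iff.rfl

noncomputable def isoInr (S : Set W) : H.induce S ≃g (joinGraph G H).induce (Sum.inr '' S) where
  toEquiv := Equiv.Set.image Sum.inr S Sum.inr_injective
  map_rel_iff' := Iff.rfl

end Aux

theorem stmt_13 {V W : Type*} [Fintype V] [Fintype W] [Nonempty V] [Nonempty W]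
    (G : SimpleGraph V) (H : SimpleGraph W) :
    WeakTypeII (joinGraph G H) ↔ WeakTypeII G ∧ WeakTypeII H := by
  constructor
  · rintro ⟨hc, hcond⟩
    have keyG : ∀ a b : V, a ≠ b → ¬ G.Adj a b →
        (G.induce ((G.neighborSet a ∩ G.neighborSet b)ᶜ)).Connected := by
      intro a b hne hadj
      have hd : (joinGraph G H).dist (Sum.inl a) (Sum.inl b) = 2 :=
        join_dist_two (Sum.inl_injective.ne hne) (by simpa using hadj)
      have hcc := hcond _ _ hd
      rw [join_compl_inl] at hcc
      exact (isoInl (H := H) _).connected_iff.mpr hcc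
    have keyH : ∀ a b : W, a ≠ b → ¬ H.Adj a b →
        (H.induce ((H.neighborSet a ∩ H.neighborSet b)ᶜ)).Connected := by
      intro a b hne hadj
      have hd : (joinGraph G H).dist (Sum.inr a) (Sum.inr b) = 2 :=
        join_dist_two (Sum.inr_injective.ne hne) (by simpa using hadj)
      have hcc := hcond _ _ hd
      rw [join_compl_inr] at hcc
      exact (isoInr (G := G) _).connected_iff.mpr hcc
    have hGconn : G.Connected := by
      rw [connected_iff]
      refine ⟨fun a b => ?_, inferInstance⟩
      by_cases hab : a = b
      · subst hab; exact Reachable.refl _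
      by_cases hadj : G.Adj a b
      · exact hadj.reachable
      have hk := keyG a b hab hadj
      have ha : a ∈ (G.neighborSet a ∩ G.neighborSet b)ᶜ := by simp [mem_neighborSet]
      have hb : b ∈ (G.neighborSet a ∩ G.neighborSet b)ᶜ := by simp [mem_neighborSet]
      have hr := hk.preconnected ⟨a, ha⟩ ⟨b, hb⟩
      exact hr.map (SimpleGraph.Embedding.induce _).toHom
    have hHconn : H.Connected := by
      rw [connected_iff]
      refine ⟨fun a b => ?_, inferInstance⟩
      by_cases hab : a = b
      · subst hab; exact Reachable.refl _
      by_cases hadj : H.Adj a b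
      · exact hadj.reachable
      have hk := keyH a b hab hadj
      have ha : a ∈ (H.neighborSet a ∩ H.neighborSet b)ᶜ := by simp [mem_neighborSet]
      have hb : b ∈ (H.neighborSet a ∩ H.neighborSet b)ᶜ := by simp [mem_neighborSet]
      have hr := hk.preconnected ⟨a, ha⟩ ⟨b, hb⟩
      exact hr.map (SimpleGraph.Embedding.induce _).toHom
    refine ⟨⟨hGconn, fun a b hd => ?_⟩, ⟨hHconn, fun a b hd => ?_⟩⟩
    · have hne : a ≠ b := by rintro rfl; simp [SimpleGraph.dist_self] at hd
      have hadj : ¬ G.Adj a b := fun h => by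
        rw [SimpleGraph.dist_eq_one_iff_adj.mpr h] at hd; omega
      exact keyG a b hne hadj
    · have hne : a ≠ b := by rintro rfl; simp [SimpleGraph.dist_self] at hd
      have hadj : ¬ H.Adj a b := fun h => by
        rw [SimpleGraph.dist_eq_one_iff_adj.mpr h] at hd; omega
      exact keyH a b hne hadj
  · rintro ⟨⟨hGc, hGcond⟩, ⟨hHc, hHcond⟩⟩
    refine ⟨join_connected, fun x y hd => ?_⟩
    have hne : x ≠ y := by rintro rfl; simp [SimpleGraph.dist_self] at hd
    have hadj : ¬ (joinGraph G H).Adj x y := fun h => by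
      rw [SimpleGraph.dist_eq_one_iff_adj.mpr h] at hd; omega
    rcases x with a | a <;> rcases y with b | b
    · have hne' : a ≠ b := fun h => hne (by rw [h])
      have hadj' : ¬ G.Adj a b := fun h => hadj (by simpa using h)
      rw [join_compl_inl]
      refine (isoInl (H := H) _).connected_iff.mp ?_
      by_cases hS : (G.neighborSet a ∩ G.neighborSet b) = ∅
      · rw [hS, Set.compl_empty]
        exact (induceUnivIso G).connected_iff.mpr hGc
      · obtain ⟨c, hc⟩ := Set.nonempty_iff_ne_empty.mpr hS
        have hd2 : G.dist a b = 2 := by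
          have hle : G.dist a b ≤ 2 :=
            SimpleGraph.dist_le (Walk.cons hc.1 (Walk.cons hc.2.symm Walk.nil))
          have h0 := hGc.pos_dist_of_ne hne'
          have h1 : G.dist a b ≠ 1 := fun h =>
            hadj' (SimpleGraph.dist_eq_one_iff_adj.mp h)
          omega
        exact hGcond a b hd2
    · exact absurd join_adj_lr hadj
    · exact absurd join_adj_rl hadj
    · have hne' : a ≠ b := fun h => hne (by rw [h])
      have hadj' : ¬ H.Adj a b := fun h => hadj (by simpa using h)
      rw [join_compl_inr]
      refine (isoInr (G := G) _).connected_iff.mp ?_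
      by_cases hS : (H.neighborSet a ∩ H.neighborSet b) = ∅
      · rw [hS, Set.compl_empty]
        exact (induceUnivIso H).connected_iff.mpr hHc
      · obtain ⟨c, hc⟩ := Set.nonempty_iff_ne_empty.mpr hS
        have hd2 : H.dist a b = 2 := by
          have hle : H.dist a b ≤ 2 :=
            SimpleGraph.dist_le (Walk.cons hc.1 (Walk.cons hc.2.symm Walk.nil))
          have h0 := hHc.pos_dist_of_ne hne'
          have h1 : H.dist a b ≠ 1 := fun h =>
            hadj' (SimpleGraph.dist_eq_one_iff_adj.mp h)
          omega
        exact hHcond a b hd2
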